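/- Every graph in 𝓜_k has odd girth at least 2·min{r₁,…,r_{k-2}} + 1, where r₁,…,r_{k−2} are the parameters used in the iterations; in particular, for every k and every g there exists a graph with chromatic number at least k and odd girth at least g. -/

import Mathlib

/-- The generalised Mycielskian `M_r(G)`: vertex set `V × {0,…,r−1} ∪ {z}`
(`none` plays the role of `z`), with edges `{(u,0),(v,0)}` and `{(u,i),(v,i+1)}`
whenever `{u,v} ∈ E(G)`, and edges `{(u,r−1),z}` for all `u`. -/
def genMycielski {V : Type} (G : SimpleGraph V) (r : ℕ) :
    SimpleGraph (Option (V × Fin r)) :=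
  SimpleGraph.fromRel (fun a b =>
    match a, b with
    | some (u, i), some (v, j) =>
        G.Adj u v ∧ ((i : ℕ) = 0 ∧ (j : ℕ) = 0 ∨ (j : ℕ) = (i : ℕ) + 1)
    | some (_, i), none => (i : ℕ) = r - 1
    | _, _ => False)
/-- The odd girth of `G`: the length of a shortest odd cycle (`⊤` if none). -/
noncomputable def oddGirth {V : Type} (G : SimpleGraph V) : ℕ∞ :=
  sInf {n : ℕ∞ | ∃ (v : V) (c : G.Walk v v), c.IsCycle ∧ Odd c.length ∧ (c.length : ℕ∞) = n}

/-- `MycFamilyP rs V G` : `G` is obtained from `K₂` by iterating the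
generalised Mycielski construction with the parameters listed in `rs`. -/
inductive MycFamilyP : List ℕ → (V : Type) → SimpleGraph V → Prop
  | base : MycFamilyP [] (Fin 2) ⊤
  | step {rs : List ℕ} {V : Type} {G : SimpleGraph V} (r : ℕ) (hr : 1 ≤ r)
      (h : MycFamilyP rs V G) :
      MycFamilyP (r :: rs) (Option (V × Fin r)) (genMycielski G r)

open SimpleGraph List

lemma walk_length_rotate {V' : Type} [DecidableEq V'] {H : SimpleGraph V'} {x u : V'}
    (c : H.Walk x x) (h : u ∈ c.support) : (c.rotate u h).length = c.length := by
  have h2 := congrArg SimpleGraph.Walk.length (c.take_spec h)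
  rw [SimpleGraph.Walk.length_append] at h2
  rw [show c.rotate u h = (c.dropUntil u h).append (c.takeUntil u h) from rfl,
    SimpleGraph.Walk.length_append]
  omega

lemma count_once_reverse {α : Type} [DecidableEq α] {l : List α} {a : α} {t : List α}
    (h : List.count a l = 1) (h2 : l.reverse = a :: t) : a ∉ t := by
  rw [← List.count_reverse, h2, List.count_cons_self] at h
  have hzero : List.count a t = 0 := by omega
  exact List.count_eq_zero.mp hzero

section Myc
variable {V : Type} {G : SimpleGraph V} {r : ℕ}

lemma genMyc_adj_some_some {u v : V} {i j : Fin r}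
    (h : (genMycielski G r).Adj (some (u,i)) (some (v,j))) :
    G.Adj u v ∧ (((i : ℕ) = 0 ∧ (j : ℕ) = 0) ∨ (j : ℕ) = (i : ℕ) + 1 ∨ (i : ℕ) = (j : ℕ) + 1) := by
  rw [genMycielski, SimpleGraph.fromRel_adj] at h
  rcases h with ⟨-, h | h⟩
  · exact ⟨h.1, by tauto⟩
  · exact ⟨h.1.symm, by tauto⟩

lemma genMyc_adj_none {x : Option (V × Fin r)} (h : (genMycielski G r).Adj none x) :
    ∃ (u : V) (i : Fin r), x = some (u, i) ∧ (i : ℕ) = r - 1 := by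
  rw [genMycielski, SimpleGraph.fromRel_adj] at h
  obtain ⟨hne, h | h⟩ := h
  · cases x with
    | none => exact absurd rfl hne
    | some p => exact absurd h (by simp)
  · cases x with
    | none => exact absurd rfl hne
    | some p => exact ⟨p.1, p.2, by simp, h⟩

lemma level_walk_bound :
    ∀ {x y : Option (V × Fin r)} (W : (genMycielski G r).Walk x y),
      none ∉ W.support → ∀ (u : V) (i : Fin r) (v : V) (j : Fin r),
      x = some (u,i) → y = some (v,j) →
      ((j : ℕ) ≤ W.length + (i : ℕ) ∧ (i : ℕ) ≤ W.length + (j : ℕ) ∧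
        ((W.length + (i : ℕ) + (j : ℕ)) % 2 = 0 ∨ (i : ℕ) + (j : ℕ) + 1 ≤ W.length)) := by
  intro x y W
  induction W with
  | nil =>
    rintro hs u i v j rfl h2
    obtain ⟨rfl, rfl⟩ : u = v ∧ i = j := by
      simpa [Prod.ext_iff] using h2
    simp
    omega
  | @cons a b c h W ih =>
    rintro hs u i v j rfl rfl
    have hs' : none ∉ W.support := fun hh => hs (by
      rw [SimpleGraph.Walk.support_cons]; exact List.mem_cons_of_mem _ hh)
    have hbne : b ≠ none := fun hb => hs' (hb ▸ W.start_mem_support)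
    cases b with
    | none => exact absurd rfl hbne
    | some p =>
      obtain ⟨w, l⟩ := p
      have hadj := genMyc_adj_some_some h
      obtain ⟨-, hlev⟩ := hadj
      obtain ⟨h1, h2, h3⟩ := ih hs' w l v j rfl rfl
      rw [SimpleGraph.Walk.length_cons]
      omega

lemma proj_walk :
    ∀ {x y : Option (V × Fin r)} (W : (genMycielski G r).Walk x y),
      none ∉ W.support → ∀ (u : V) (i : Fin r) (v : V) (j : Fin r),
      x = some (u,i) → y = some (v,j) →
      ∃ P : G.Walk u v, P.length = W.length := by
  intro x y W
  induction W with
  | nil =>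
    rintro hs u i v j rfl h2
    obtain ⟨rfl, rfl⟩ : u = v ∧ i = j := by
      simpa [Prod.ext_iff] using h2
    exact ⟨SimpleGraph.Walk.nil, rfl⟩
  | @cons a b c h W ih =>
    rintro hs u i v j rfl rfl
    have hs' : none ∉ W.support := fun hh => hs (by
      rw [SimpleGraph.Walk.support_cons]; exact List.mem_cons_of_mem _ hh)
    have hbne : b ≠ none := fun hb => hs' (hb ▸ W.start_mem_support)
    cases b with
    | none => exact absurd rfl hbne
    | some p =>
      obtain ⟨w, l⟩ := p
      have hadj := (genMyc_adj_some_some h).1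
      obtain ⟨P, hP⟩ := ih hs' w l v j rfl rfl
      exact ⟨SimpleGraph.Walk.cons hadj P, by
        rw [SimpleGraph.Walk.length_cons, SimpleGraph.Walk.length_cons, hP]⟩

lemma myc_closed (hr : 1 ≤ r) (m : ℕ) (hm : m ≤ r)
    (IH : ∀ (x : V) (P : G.Walk x x), Odd P.length → 2*m+1 ≤ P.length) :
    ∀ (x : Option (V × Fin r)) (W : (genMycielski G r).Walk x x),
      Odd W.length → 2*m+1 ≤ W.length := by
  suffices H : ∀ (n : ℕ) (x : Option (V × Fin r)) (W : (genMycielski G r).Walk x x),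
      W.length = n → Odd n → 2*m+1 ≤ n by
    intro x W h
    exact H W.length x W rfl h
  classical
  intro n
  induction n using Nat.strong_induction_on with
  | _ n ihn =>
  intro x W hlen hodd
  by_cases hz : none ∈ W.support
  · have KEY : ∀ (C : (genMycielski G r).Walk none none), C.length = n → 2*m+1 ≤ n := by
      intro C hClen
      cases C with
      | nil =>
        simp only [SimpleGraph.Walk.length_nil] at hClen
        rcases hodd with ⟨t, ht⟩
        omega
      | @cons _ b _ e P =>
        rw [SimpleGraph.Walk.length_cons] at hClen
        obtain ⟨w, i₀, rfl, hi₀⟩ := genMyc_adj_none e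
        have hPs : none ∈ P.support := P.end_mem_support
        have hspec := P.take_spec hPs
        have hlensum : (P.takeUntil none hPs).length + (P.dropUntil none hPs).length
            = P.length := by
          rw [← SimpleGraph.Walk.length_append, hspec]
        by_cases hR : (P.dropUntil none hPs).length = 0
        · have hcount := P.count_support_takeUntil_eq_one hPs
          cases hQr : (P.takeUntil none hPs).reverse with
          | @cons _ cc _ e₂ S =>
            obtain ⟨w₂, i₂, rfl, hi₂⟩ := genMyc_adj_none e₂
            have h6 : (P.takeUntil none hPs).support.reverse = none :: S.support := by
              rw [← SimpleGraph.Walk.support_reverse, hQr, SimpleGraph.Walk.support_cons]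
            have hnS : none ∉ S.support := count_once_reverse hcount h6
            have hSlen : S.length + 1 = (P.takeUntil none hPs).length := by
              have h5 := congrArg SimpleGraph.Walk.length hQr
              rw [SimpleGraph.Walk.length_reverse, SimpleGraph.Walk.length_cons] at h5
              omega
            obtain ⟨h1, h2, h3⟩ := level_walk_bound S hnS w₂ i₂ w i₀ rfl rfl
            rcases hodd with ⟨t, ht⟩
            omega
        · have hW1len : (SimpleGraph.Walk.cons e (P.takeUntil none hPs)).length
              = (P.takeUntil none hPs).length + 1 := SimpleGraph.Walk.length_cons _ _
          rcases Nat.even_or_odd (P.dropUntil none hPs).length with hEv | hOd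
          · have hodd1 : Odd ((P.takeUntil none hPs).length + 1) := by
              rcases hodd with ⟨t, ht⟩
              rcases hEv with ⟨s, hs⟩
              exact Nat.odd_iff.2 (by omega)
            have hb := ihn ((P.takeUntil none hPs).length + 1) (by omega) none
              (SimpleGraph.Walk.cons e (P.takeUntil none hPs)) hW1len hodd1
            omega
          · have hb := ihn (P.dropUntil none hPs).length (by omega) none
              (P.dropUntil none hPs) rfl hOd
            omega
    exact KEY (W.rotate none hz) (by rw [walk_length_rotate]; exact hlen)
  · cases x with
    | none => exact absurd W.start_mem_support hz
    | some p =>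
      obtain ⟨u, i⟩ := p
      obtain ⟨P, hP⟩ := proj_walk W hz u i u i rfl rfl
      have := IH u P (by rw [hP, hlen]; exact hodd)
      omega

lemma top2_parity : ∀ {u v : Fin 2} (W : (⊤ : SimpleGraph (Fin 2)).Walk u v),
    W.length % 2 = 0 ↔ u = v := by
  intro u v W
  induction W with
  | nil => simp
  | @cons a b c h W ih =>
    have hab : a ≠ b := h.ne
    have step : ((SimpleGraph.Walk.cons h W).length) = W.length + 1 :=
      SimpleGraph.Walk.length_cons _ _
    rw [step]
    have : (W.length + 1) % 2 = 0 ↔ ¬ (W.length % 2 = 0) := by omega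
    rw [this, ih]
    revert hab
    fin_cases a <;> fin_cases b <;> fin_cases c <;> simp

lemma closed_walk_len_ne_one {V' : Type} {H : SimpleGraph V'} {x : V'} (W : H.Walk x x) :
    W.length ≠ 1 := by
  intro h1
  cases W with
  | nil => simp at h1
  | @cons _ b _ e P =>
    rw [SimpleGraph.Walk.length_cons] at h1
    have h0 : P.length = 0 := by omega
    have hb := SimpleGraph.Walk.eq_of_length_eq_zero h0
    subst hb
    exact e.ne rfl

/-! ## Shift graphs -/

def ShV (k : ℕ) : Type := {l : List ℕ // l.Chain' (· < ·) ∧ l.length = k}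

def shRel {k : ℕ} (a b : ShV k) : Prop := a.1.tail = b.1.dropLast

def Sh (k : ℕ) : SimpleGraph (ShV k) := SimpleGraph.fromRel shRel

lemma sh_adj {m : ℕ} {a b : ShV m} :
    (Sh m).Adj a b ↔ a ≠ b ∧ (shRel a b ∨ shRel b a) :=
  SimpleGraph.fromRel_adj _ _ _

lemma tail_dropLast_comm {α : Type} (l : List α) : l.dropLast.tail = l.tail.dropLast := by
  rcases l with _ | ⟨x, _ | ⟨y, t⟩⟩ <;> simp [List.dropLast_cons₂]

lemma shRel_headI {k : ℕ} {a b : ShV (k+2)} (h : shRel a b) : a.1.headI < b.1.headI := by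
  obtain ⟨la, hca, hla⟩ := a
  obtain ⟨lb, hcb, hlb⟩ := b
  unfold shRel at h
  simp only at h
  rcases la with _ | ⟨x, _ | ⟨y, t⟩⟩
  · simp at hla
  · simp at hla
  rcases lb with _ | ⟨x', _ | ⟨y', t'⟩⟩
  · simp at hlb
  · simp at hlb
  rw [List.dropLast_cons₂, List.tail_cons] at h
  injection h with h1 h2
  have hxy : x < y := (List.isChain_cons_cons.mp hca).1
  show x < x'
  omega

lemma dropLast_ne_tail {k : ℕ} (b : ShV (k+2)) : b.1.dropLast ≠ b.1.tail := by
  obtain ⟨lb, hcb, hlb⟩ := b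
  rcases lb with _ | ⟨x, _ | ⟨y, t⟩⟩
  · simp at hlb
  · simp at hlb
  intro h
  rw [List.dropLast_cons₂, List.tail_cons] at h
  injection h with h1 h2
  exact absurd h1 (Nat.ne_of_lt (List.isChain_cons_cons.mp hcb).1)

def shProjFun {k : ℕ} (a : ShV (k+2)) : ShV (k+1) :=
  ⟨a.1.tail, a.2.1.tail, by simp [List.length_tail, a.2.2]⟩

lemma shProj_rel {k : ℕ} {a b : ShV (k+2)} (h : shRel a b) :
    shRel (shProjFun a) (shProjFun b) := by
  show a.1.tail.tail = b.1.tail.dropLast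
  rw [show a.1.tail = b.1.dropLast from h, tail_dropLast_comm]

lemma shProj_ne {k : ℕ} {a b : ShV (k+2)} (h : shRel a b) :
    shProjFun a ≠ shProjFun b := by
  intro heq
  have hval : a.1.tail = b.1.tail := congrArg Subtype.val heq
  exact dropLast_ne_tail b (by rw [← (show a.1.tail = b.1.dropLast from h), hval])

def shProj {k : ℕ} : Sh (k+2) →g Sh (k+1) where
  toFun := shProjFun
  map_rel' := by
    intro a b hadj
    obtain ⟨hne, hrel | hrel⟩ := sh_adj.mp hadj
    · exact sh_adj.mpr ⟨shProj_ne hrel, Or.inl (shProj_rel hrel)⟩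
    · exact sh_adj.mpr ⟨(shProj_ne hrel).symm, Or.inr (shProj_rel hrel)⟩

lemma sh_oddwalk : ∀ (k : ℕ) (x : ShV (k+1)) (W : (Sh (k+1)).Walk x x),
    Odd W.length → 2*(k+1)+1 ≤ W.length := by
  intro k
  induction k with
  | zero =>
    intro x W hodd
    have h1 := closed_walk_len_ne_one W
    rcases hodd with ⟨t, ht⟩
    omega
  | succ k ih =>
    intro x W hodd
    classical
    have h1 := closed_walk_len_ne_one W
    -- find the vertex with maximal head
    have hex : ∃ mv, mv ∈ List.argmax (fun a : ShV (k+2) => a.1.headI) W.support := by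
      cases h : List.argmax (fun a : ShV (k+2) => a.1.headI) W.support with
      | none => exact absurd (List.argmax_eq_none.mp h) W.support_ne_nil
      | some mv => exact ⟨mv, rfl⟩
    obtain ⟨mv, hmv⟩ := hex
    have hmem : mv ∈ W.support := List.argmax_mem hmv
    have hmax : ∀ a ∈ W.support, a.1.headI ≤ mv.1.headI :=
      fun a ha => List.le_of_mem_argmax (f := fun a : ShV (k+2) => a.1.headI) ha hmv
    have KEY : ∀ (C : (Sh (k+2)).Walk mv mv), (∀ a ∈ C.support, a ∈ W.support) →
        C.length = W.length → 2*(k+2)+1 ≤ W.length := by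
      intro C hCsub hCl
      cases C with
      | nil =>
        rcases hodd with ⟨t, ht⟩
        simp only [SimpleGraph.Walk.length_nil] at hCl
        omega
      | @cons _ b _ e P =>
        rw [SimpleGraph.Walk.length_cons] at hCl
        cases hPr : P.reverse with
        | nil => exact absurd rfl e.ne
        | @cons _ c _ e₂ S =>
          -- e : Adj mv b, e₂ : Adj mv c, S : Walk c b
          have hSlen : S.length + 1 = P.length := by
            have := congrArg SimpleGraph.Walk.length hPr
            rw [SimpleGraph.Walk.length_reverse, SimpleGraph.Walk.length_cons] at this
            omega
          have hbW : b ∈ W.support := hCsub b (by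
            rw [SimpleGraph.Walk.support_cons]
            exact List.mem_cons_of_mem _ P.start_mem_support)
          have hcW : c ∈ W.support := hCsub c (by
            rw [SimpleGraph.Walk.support_cons]
            refine List.mem_cons_of_mem _ ?_
            have hcP : c ∈ P.reverse.support := by
              rw [hPr, SimpleGraph.Walk.support_cons]
              exact List.mem_cons_of_mem _ S.start_mem_support
            rwa [SimpleGraph.Walk.support_reverse, List.mem_reverse] at hcP)
          have hrb : shRel b mv := by
            obtain ⟨hne, hrel | hrel⟩ := sh_adj.mp e
            · exact absurd (shRel_headI hrel) (Nat.not_lt.mpr (hmax b hbW))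
            · exact hrel
          have hrc : shRel c mv := by
            obtain ⟨hne, hrel | hrel⟩ := sh_adj.mp e₂
            · exact absurd (shRel_headI hrel) (Nat.not_lt.mpr (hmax c hcW))
            · exact hrel
          have hπ : shProj c = shProj b := by
            apply Subtype.ext
            show c.1.tail = b.1.tail
            rw [show c.1.tail = mv.1.dropLast from hrc, show b.1.tail = mv.1.dropLast from hrb]
          have hlen2 : ((S.map shProj).copy hπ rfl).length = S.length := by
            rw [SimpleGraph.Walk.length_copy, SimpleGraph.Walk.length_map]
          have hodd2 : Odd ((S.map shProj).copy hπ rfl).length := by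
            rcases hodd with ⟨t, ht⟩
            rw [hlen2]
            exact Nat.odd_iff.mpr (by omega)
          have := ih (shProj b) ((S.map shProj).copy hπ rfl) hodd2
          rw [hlen2] at this
          omega
    refine KEY (W.rotate mv hmem) ?_ (walk_length_rotate W hmem)
    intro a ha
    rw [SimpleGraph.Walk.support_eq_cons] at ha
    rcases List.mem_cons.mp ha with rfl | ha
    · exact hmem
    · exact List.mem_of_mem_tail
        (((SimpleGraph.Walk.support_rotate W mv hmem).perm.mem_iff).mp ha)

/-! ## chromatic number of shift graphs -/

def gl (l : List ℕ) : ℕ := l.getLast?.getD 0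

lemma gl_cons_cons (x y : ℕ) (t : List ℕ) : gl (x :: y :: t) = gl (y :: t) := by
  simp [gl, List.getLast?_cons_cons]

lemma gl_concat (l : List ℕ) (y : ℕ) : gl (l ++ [y]) = y := by
  simp [gl, List.getLast?_concat]

lemma gl_dropLast_lt : ∀ (l : List ℕ), l.Chain' (· < ·) → 2 ≤ l.length →
    gl l.dropLast < gl l := by
  intro l
  induction l with
  | nil => simp
  | cons x t ih =>
    intro hch hlen
    rcases t with _ | ⟨y, t2⟩
    · simp at hlen
    rcases t2 with _ | ⟨z, t3⟩
    · simpa [gl] using (List.isChain_cons_cons.mp hch).1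
    · have hlt := ih hch.tail (by simp)
      rw [List.dropLast_cons₂] at hlt
      rw [List.dropLast_cons₂, List.dropLast_cons₂, gl_cons_cons x, gl_cons_cons x]
      exact hlt

lemma gl_some {m : ℕ} (a : ShV (m+1)) : a.1.getLast? = some (gl a.1) := by
  have hne : a.1 ≠ [] := by
    intro h
    have := a.2.2
    rw [h] at this
    simp at this
  cases hgb : a.1.getLast? with
  | none => exact absurd (List.getLast?_eq_none_iff.mp hgb) hne
  | some v => simp [gl, hgb]

def extV {k : ℕ} (a : ShV (k+1)) (y : ℕ) (h : gl a.1 < y) : ShV (k+2) :=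
  ⟨a.1 ++ [y], by
    refine List.isChain_append.mpr ⟨a.2.1, List.isChain_singleton y, ?_⟩
    intro x hx y' hy'
    simp only [List.head?_cons, Option.mem_def, Option.some.injEq] at hy'
    subst hy'
    rw [gl_some a] at hx
    simp only [Option.mem_def, Option.some.injEq] at hx
    omega, by simp [a.2.2]⟩

lemma shRel_gl_lt {k : ℕ} (hk : 1 ≤ k) {a b : ShV (k+1)} (h : shRel a b) :
    gl a.1 < gl b.1 := by
  have hlen : 2 ≤ a.1.length := by rw [a.2.2]; omega
  have hlenb : 2 ≤ b.1.length := by rw [b.2.2]; omega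
  have h2 : gl a.1 = gl a.1.tail := by
    obtain ⟨la, hca, hla⟩ := a
    rcases la with _ | ⟨x, _ | ⟨y, t⟩⟩
    · simp at hla
    · simp at hla; omega
    · exact (gl_cons_cons x y t).symm
  rw [h2, show a.1.tail = b.1.dropLast from h]
  exact gl_dropLast_lt b.1 b.2.1 hlenb

open scoped Classical in
noncomputable def shColor {k n : ℕ} (C : (Sh (k+2)).Coloring (Fin n)) (a : ShV (k+1)) :
    Finset (Fin n) :=
  Finset.univ.filter (fun col => ∃ (y : ℕ) (h : gl a.1 < y), C (extV a y h) = col)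

lemma shColor_helper {k n : ℕ} (C : (Sh (k+2)).Coloring (Fin n)) (a b : ShV (k+1))
    (hrel : shRel a b) (hlt : gl a.1 < gl b.1) (hfn : shColor C a = shColor C b) : False := by
  classical
  have hmem1 : C (extV a (gl b.1) hlt) ∈ shColor C a := by
    rw [shColor, Finset.mem_filter]
    exact ⟨Finset.mem_univ _, ⟨gl b.1, hlt, rfl⟩⟩
  rw [hfn, shColor, Finset.mem_filter] at hmem1
  obtain ⟨-, y, hy, hcol⟩ := hmem1
  have hane : a.1 ≠ [] := by
    intro h
    have := a.2.2
    rw [h] at this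
    simp at this
  have hshift : shRel (extV a (gl b.1) hlt) (extV b y hy) := by
    show (a.1 ++ [gl b.1]).tail = (b.1 ++ [y]).dropLast
    rw [List.dropLast_concat, List.tail_append_of_ne_nil hane,
      show a.1.tail = b.1.dropLast from hrel]
    exact List.dropLast_append_getLast? _ (gl_some b)
  have hnoteq : extV a (gl b.1) hlt ≠ extV b y hy := by
    intro h
    have h3 := congrArg (fun z : ShV (k+2) => gl z.1) h
    simp only [extV, gl_concat] at h3
    omega
  exact C.valid (sh_adj.mpr ⟨hnoteq, Or.inl hshift⟩) hcol.symm

lemma sh_not_colorable : ∀ (k n : ℕ), ¬ (Sh (k+1)).Colorable n := by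
  intro k
  induction k with
  | zero =>
    intro n hc
    obtain ⟨C⟩ := hc
    obtain ⟨i, j, hne, heq⟩ := Finite.exists_ne_map_eq_of_infinite
      (fun i : ℕ => C ⟨[i], List.isChain_singleton i, rfl⟩)
    refine C.valid (sh_adj.mpr ⟨?_, Or.inl ?_⟩) heq
    · intro h
      exact hne (by simpa using congrArg Subtype.val h)
    · show List.tail [i] = List.dropLast [j]
      simp
  | succ k ih =>
    intro n hc
    obtain ⟨C⟩ := hc
    have hvalid : ∀ {a b : ShV (k+1)}, (Sh (k+1)).Adj a b → shColor C a ≠ shColor C b := by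
      have main : ∀ a b : ShV (k+1), a ≠ b → shRel a b → shColor C a = shColor C b → False := by
        intro a b hne hrel hfn
        rcases Nat.lt_or_ge k 1 with hk | hk
        · -- k = 0 : singletons
          have hk0 : k = 0 := by omega
          subst hk0
          obtain ⟨la, hca, hla⟩ := a
          obtain ⟨lb, hcb, hlb⟩ := b
          rcases la with _ | ⟨xa, _ | ⟨ya, ta⟩⟩
          · simp at hla
          · rcases lb with _ | ⟨xb, _ | ⟨yb, tb⟩⟩
            · simp at hlb
            · have hxne : xa ≠ xb := by
                intro h
                exact hne (by subst h; rfl)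
              have trel : ∀ (u v : ShV 1), shRel u v := by
                rintro ⟨lu, -, hlu⟩ ⟨lv, -, hlv⟩
                show lu.tail = lv.dropLast
                rcases lu with _ | ⟨xu, tu⟩
                · simp at hlu
                rcases lv with _ | ⟨xv, tv⟩
                · simp at hlv
                obtain rfl : tu = [] := List.length_eq_zero_iff.mp (by simpa using hlu)
                obtain rfl : tv = [] := List.length_eq_zero_iff.mp (by simpa using hlv)
                simp
              rcases lt_or_gt_of_ne hxne with h | h
              · exact shColor_helper C _ _ hrel (by simpa [gl] using h) hfn
              · exact shColor_helper C _ _ (trel _ _) (by simpa [gl] using h) hfn.symm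
            · simp at hlb
          · simp at hla
        · exact shColor_helper C a b hrel (shRel_gl_lt hk hrel) hfn
      intro a b hadj hfn
      obtain ⟨hne, hrel | hrel⟩ := sh_adj.mp hadj
      · exact main a b hne hrel hfn
      · exact main b a hne.symm hrel hfn.symm
    have ψ : (Sh (k+1)).Coloring (Finset (Fin n)) := SimpleGraph.Coloring.mk _ hvalid
    exact ih _ ψ.colorable

lemma myc_family_closed : ∀ (rs : List ℕ) (V : Type) (G : SimpleGraph V), MycFamilyP rs V G →
    ∀ m : ℕ, (∀ r ∈ rs, m ≤ r) →
    ∀ (x : V) (W : G.Walk x x), Odd W.length → 2*m+1 ≤ W.length := by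
  intro rs V G h
  induction h with
  | base =>
    intro m hm x W hodd
    have hpar := (top2_parity W).mpr rfl
    rcases hodd with ⟨t, ht⟩
    omega
  | @step rs V G r hr hfam ih =>
    intro m hm
    exact myc_closed hr m (hm r (List.mem_cons_self))
      (ih m (fun r' hr' => hm r' (List.mem_cons_of_mem _ hr')))

/-- Every graph in `𝓜_k` built with parameters `r₁, …, r_{k−2}` has odd girth
at least `2·min{r₁,…,r_{k−2}} + 1`; in particular, for every `k` and `g` there
is a graph with chromatic number at least `k` and odd girth at least `g`. -/
theorem oddGirth_mycFamily :
    (∀ (rs : List ℕ) (V : Type) (G : SimpleGraph V), MycFamilyP rs V G →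
      ∀ m : ℕ, (∀ r ∈ rs, m ≤ r) →
        ((2 * m + 1 : ℕ) : ℕ∞) ≤ oddGirth G) ∧
    ∀ k g : ℕ, ∃ (V : Type) (G : SimpleGraph V),
      (k : ℕ∞) ≤ G.chromaticNumber ∧ (g : ℕ∞) ≤ oddGirth G := by
  constructor
  · intro rs V G hfam m hm
    refine le_sInf ?_
    rintro n ⟨v, c, hcyc, hodd, rfl⟩
    exact_mod_cast myc_family_closed rs V G hfam m hm v c hodd
  · intro k g
    refine ⟨ShV (g+1), Sh (g+1), ?_, ?_⟩
    · have htop : (Sh (g+1)).chromaticNumber = ⊤ := by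
        by_contra h
        obtain ⟨n, hn⟩ := SimpleGraph.chromaticNumber_ne_top_iff_exists.mp h
        exact sh_not_colorable g n hn
      rw [htop]
      exact le_top
    · refine le_sInf ?_
      rintro n ⟨v, c, hcyc, hodd, rfl⟩
      have hb := sh_oddwalk g v c hodd
      exact_mod_cast le_trans (by omega : g ≤ 2*(g+1)+1) hb
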